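/- Let s1, u1, w1, u2, w2, y2 be words over B and t1, x2, v nonempty words such that v is primitive, |t1| = |x2|, and for all i, j ∈ ℕ, s1·t1^j·u1·v^i·w1 = u2·v^i·w2·x2^j·y2. Then there exist contexts f1, f2 such that for all i ≥ 1 and j ≥ 1 there exists k ∈ ℕ with t1^j·u1·v^i = f1[v^k] and v^i·w2·x2^j = f2[v^k]. -/

import Mathlib

/-- `wpow x n` is the word `x` repeated `n` times (`x^n`). -/
def wpow {B : Type*} (x : List B) : ℕ → List B
  | 0 => []
  | n + 1 => x ++ wpow x n

/-- Length of a longest common factor (infix) of `u` and `v`. -/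
noncomputable def lcfLen {B : Type*} (u v : List B) : ℕ :=
  sSup {n | ∃ w : List B, w.length = n ∧ w <:+: u ∧ w <:+: v}

/-- The factor distance `dist_f(u,v) = |u| + |v| - 2·|lcf(u,v)|`. -/
noncomputable def distf {B : Type*} (u v : List B) : ℕ :=
  u.length + v.length - 2 * lcfLen u v

/-- A context is a pair of words; `capp c w = c.1 ++ w ++ c.2` is `c[w]`. -/
def capp {B : Type*} (c : List B × List B) (w : List B) : List B :=
  c.1 ++ w ++ c.2

/-- The length `|c|` of a context. -/
def clen {B : Type*} (c : List B × List B) : ℕ :=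
  c.1.length + c.2.length

/-- Product of contexts: `(c·d)[w] = c[d[w]]`. -/
def cmul {B : Type*} (c d : List B × List B) : List B × List B :=
  (c.1 ++ d.1, d.2 ++ c.2)

/-- Power of a context: `c^n[w] = l^n ++ w ++ r^n`. -/
def cpow {B : Type*} (c : List B × List B) (n : ℕ) : List B × List B :=
  (wpow c.1 n, wpow c.2 n)

/-- A nonempty word `x` is primitive if `x = y^p` with `p ≥ 1` implies `p = 1`. -/
def Primitive {B : Type*} (x : List B) : Prop :=
  x ≠ [] ∧ ∀ (y : List B) (p : ℕ), 1 ≤ p → x = wpow y p → p = 1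

/-- Words `x` and `y` are conjugate. -/
def Conj {B : Type*} (x y : List B) : Prop :=
  ∃ t1 t2 : List B, x = t1 ++ t2 ∧ y = t2 ++ t1

/-- The triple of contexts `(c, d, e)` is `x`-commuting: there is a context `f`
such that for every `i ≥ 1` there is `k` with `(e^i·d·c)[ε] = f[x^k]`. -/
def XCommuting {B : Type*} (c d e : List B × List B) (x : List B) : Prop :=
  ∃ f : List B × List B, ∀ i : ℕ, 1 ≤ i → ∃ k : ℕ,
    capp (cmul (cpow e i) (cmul d c)) [] = capp f (wpow x k)

namespace CombComAux

variable {B : Type*}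
variable {B : Type*}

lemma wpow_add (x : List B) (m n : ℕ) : wpow x (m+n) = wpow x m ++ wpow x n := by
  induction m with
  | zero => simp [wpow]
  | succ m ih => rw [Nat.succ_add]; simp [wpow, ih]

lemma wpow_length (x : List B) (n : ℕ) : (wpow x n).length = n * x.length := by
  induction n with
  | zero => simp [wpow]
  | succ n ih => simp [wpow, ih, Nat.succ_mul, Nat.add_comm]

lemma wpow_comm (x : List B) (n : ℕ) : x ++ wpow x n = wpow x n ++ x := by
  induction n with
  | zero => simp [wpow]
  | succ n ih => show x ++ (x ++ wpow x n) = (x ++ wpow x n) ++ x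
                 rw [List.append_assoc, ih]

lemma wpow_reverse (x : List B) (n : ℕ) : (wpow x n).reverse = wpow x.reverse n := by
  induction n with
  | zero => simp [wpow]
  | succ n ih =>
    show (x ++ wpow x n).reverse = x.reverse ++ wpow x.reverse n
    rw [List.reverse_append, ih, wpow_comm]

/-- shorter of two words starting the same word is a prefix of the longer -/
lemma prefix_of_eq_append {u w a b : List B} (h : u ++ a = w ++ b)
    (hl : u.length ≤ w.length) : u <+: w := by
  have h1 : u = (w ++ b).take u.length := by
    rw [← h, List.take_left]
  rw [List.take_append_of_le_length hl] at h1
  rw [h1]; exact List.take_prefix _ _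

lemma comm_exists : ∀ N (u w : List B), u.length + w.length ≤ N → u ++ w = w ++ u →
    ∃ t m n, u = wpow t m ∧ w = wpow t n := by
  intro N
  induction N with
  | zero =>
    intro u w hl _
    have hu : u = [] := by
      have := List.length_eq_zero_iff.mp (by omega : u.length = 0); exact this
    have hw : w = [] := List.length_eq_zero_iff.mp (by omega)
    exact ⟨[], 0, 0, by simp [hu, wpow], by simp [hw, wpow]⟩
  | succ N ih =>
    intro u w hl h
    rcases le_or_gt u.length w.length with hle | hlt
    · rcases eq_or_ne u [] with hu | hu
      · exact ⟨w, 0, 1, by simp [hu, wpow], by simp [wpow]⟩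
      · have hpre : u <+: w := prefix_of_eq_append h hle
        obtain ⟨w2, hw2⟩ := hpre
        rw [← hw2] at h
        have h2 : u ++ w2 = w2 ++ u :=
          List.append_cancel_left (as := u) (by simpa [List.append_assoc] using h)
        have hul : 1 ≤ u.length := by
          cases u with
          | nil => exact absurd rfl hu
          | cons a l => simp
        have hlen2 : u.length + w2.length ≤ N := by
          have : u.length + w2.length = w.length := by
            rw [← hw2]; simp
          omega
        obtain ⟨t, m, n, hm, hn⟩ := ih u w2 hlen2 h2
        exact ⟨t, m, m + n, hm, by rw [← hw2, hm, hn, wpow_add]⟩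
    · rcases eq_or_ne w [] with hw | hw
      · exact ⟨u, 1, 0, by simp [wpow], by simp [hw, wpow]⟩
      · have hpre : w <+: u := prefix_of_eq_append h.symm (le_of_lt hlt)
        obtain ⟨u2, hu2⟩ := hpre
        rw [← hu2] at h
        have h2 : w ++ u2 = u2 ++ w :=
          List.append_cancel_left (as := w) (by simpa [List.append_assoc] using h.symm)
        have hwl : 1 ≤ w.length := by
          cases w with
          | nil => exact absurd rfl hw
          | cons a l => simp
        have hlen2 : w.length + u2.length ≤ N := by
          have : w.length + u2.length = u.length := by
            rw [← hu2]; simp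
          omega
        obtain ⟨t, m, n, hm, hn⟩ := ih w u2 hlen2 h2
        exact ⟨t, m + n, m, by rw [← hu2, hm, hn, wpow_add], hm⟩


lemma length_pos_of_ne_nil {x : List B} (hx : x ≠ []) : 1 ≤ x.length := by
  cases x with
  | nil => exact absurd rfl hx
  | cons a l => simp

lemma prefix_wpow_decomp (v : List B) (hv : v ≠ []) :
    ∀ n (r : List B), r <+: wpow v n →
      ∃ m v', r = wpow v m ++ v' ∧ v' <+: v ∧ v'.length < v.length := by
  intro n
  induction n with
  | zero =>
    intro r hr
    have : r = [] := List.prefix_nil.mp hr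
    exact ⟨0, [], by simp [this, wpow], List.nil_prefix,
      by exact length_pos_of_ne_nil hv⟩
  | succ n ih =>
    intro r hr
    obtain ⟨a, ha⟩ := hr
    rcases lt_or_ge r.length v.length with hlt | hle
    · have : r <+: v := prefix_of_eq_append (by simpa [wpow, List.append_assoc] using ha) (le_of_lt hlt)
      exact ⟨0, r, by simp [wpow], this, hlt⟩
    · have hvp : v <+: r := prefix_of_eq_append
        (by simpa [wpow, List.append_assoc] using ha.symm) hle
      obtain ⟨r2, hr2⟩ := hvp
      have hr2p : r2 <+: wpow v n := by
        refine ⟨a, ?_⟩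
        apply List.append_cancel_left (as := v)
        rw [← List.append_assoc, hr2]
        simpa [wpow, List.append_assoc] using ha
      obtain ⟨m, v', hdec, hp, hl⟩ := ih r2 hr2p
      exact ⟨m + 1, v', by
        rw [← hr2, hdec]
        have : wpow v (m+1) = v ++ wpow v m := rfl
        rw [this, List.append_assoc], hp, hl⟩

lemma prefix_prim {v v' : List B} (hv : Primitive v) (hp : v' <+: v)
    (hlen : v'.length < v.length) (h : v' ++ v <+: v ++ v) : v' = [] := by
  by_contra hne
  obtain ⟨s, hs⟩ := hp  -- v' ++ s = v
  have hsne : s ≠ [] := by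
    intro hs0
    rw [hs0] at hs
    simp at hs
    simp [hs] at hlen
  obtain ⟨t0, ht0⟩ := h  -- (v' ++ v) ++ t0 = v ++ v
  rw [← hs] at ht0
  -- ht0 : (v' ++ (v' ++ s)) ++ t0 = (v' ++ s) ++ (v' ++ s)
  have h2 : (v' ++ s) ++ t0 = s ++ (v' ++ s) :=
    List.append_cancel_left (as := v') (by simpa [List.append_assoc] using ht0)
  have h3 : v' ++ s = s ++ v' := by
    have hpre : v' ++ s <+: s ++ v' := prefix_of_eq_append
      (by simpa [List.append_assoc] using h2) (by simp [Nat.add_comm])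
    exact List.IsPrefix.eq_of_length hpre (by simp [Nat.add_comm])
  obtain ⟨t, m, n, hm, hn⟩ := comm_exists (v'.length + s.length) v' s le_rfl h3
  have hm1 : 1 ≤ m := by
    rcases Nat.eq_zero_or_pos m with h0 | h1
    · rw [h0] at hm; simp [wpow] at hm; exact absurd hm hne
    · exact h1
  have hn1 : 1 ≤ n := by
    rcases Nat.eq_zero_or_pos n with h0 | h1
    · rw [h0] at hn; simp [wpow] at hn; exact absurd hn hsne
    · exact h1
  have hvp : v = wpow t (m + n) := by rw [wpow_add, ← hm, ← hn, hs]
  have := hv.2 t (m + n) (by omega) hvp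
  omega


lemma stepA {v A u2 w1 : List B} (hv : Primitive v)
    (h : ∀ i : ℕ, ∃ Z, A ++ wpow v i ++ w1 = u2 ++ wpow v i ++ Z)
    (hle : u2.length ≤ A.length) :
    ∃ m, A = u2 ++ wpow v m := by
  have hvl : 1 ≤ v.length := length_pos_of_ne_nil hv.1
  -- u2 is a prefix of A
  obtain ⟨Z0, h0⟩ := h 0
  simp [wpow] at h0
  have hpre : u2 <+: A := prefix_of_eq_append
    (by simpa [List.append_assoc] using h0.symm) hle
  obtain ⟨r, hr⟩ := hpre  -- u2 ++ r = A
  have hr' : ∀ i : ℕ, ∃ Z, r ++ wpow v i ++ w1 = wpow v i ++ Z := by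
    intro i
    obtain ⟨Z, hZ⟩ := h i
    refine ⟨Z, List.append_cancel_left (as := u2) ?_⟩
    rw [← hr] at hZ
    simpa [List.append_assoc] using hZ
  -- r is a prefix of a power of v
  obtain ⟨Z1, h1⟩ := hr' r.length
  have hrp : r <+: wpow v r.length := prefix_of_eq_append
    (by simpa [List.append_assoc] using h1)
    (by rw [wpow_length]; exact Nat.le_mul_of_pos_right _ hvl)
  obtain ⟨m, v', hdec, hp, hl⟩ := prefix_wpow_decomp v hv.1 _ r hrp
  -- use instance i = m + 2
  obtain ⟨Z2, h2⟩ := hr' (m + 2)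
  rw [hdec] at h2
  have h2' : v' ++ wpow v (m + 2) ++ w1 = wpow v 2 ++ Z2 := by
    refine List.append_cancel_left (as := wpow v m) ?_
    have : wpow v (m + 2) = wpow v m ++ wpow v 2 := wpow_add v m 2
    rw [this] at h2 ⊢
    simpa [List.append_assoc] using h2
  have hpp : v' ++ v <+: v ++ v := by
    apply prefix_of_eq_append (a := wpow v (m+1) ++ w1) (b := Z2)
    · have e1 : v' ++ wpow v (m+2) = (v' ++ v) ++ wpow v (m+1) := by
        have : wpow v (m+2) = v ++ wpow v (m+1) := by
          rw [show m + 2 = 1 + (m+1) by omega, wpow_add]; simp [wpow]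
        rw [this, ← List.append_assoc]
      have e2 : wpow v 2 = v ++ v := by simp [wpow]
      rw [e1, e2] at h2'
      simpa [List.append_assoc] using h2'
    · simp; omega
  have hv0 : v' = [] := prefix_prim hv hp hl hpp
  rw [hv0] at hdec
  simp at hdec
  exact ⟨m, by rw [← hr, hdec]⟩


lemma main_lemma (s1 u1 w1 u2 t1 v : List B) (ht1 : t1 ≠ []) (hv : Primitive v)
    (h : ∀ i j : ℕ, ∃ Z, s1 ++ wpow t1 j ++ u1 ++ wpow v i ++ w1 = u2 ++ wpow v i ++ Z) :
    ∃ e : ℕ, 1 ≤ e ∧ t1 ++ u1 = u1 ++ wpow v e := by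
  have ht1l : 1 ≤ t1.length := length_pos_of_ne_nil ht1
  have hvl : 1 ≤ v.length := length_pos_of_ne_nil hv.1
  set J := u2.length with hJ
  have key : ∀ j : ℕ, J ≤ j → ∃ m, s1 ++ wpow t1 j ++ u1 = u2 ++ wpow v m := by
    intro j hj
    apply stepA hv
    · intro i
      obtain ⟨Z, hZ⟩ := h i j
      exact ⟨Z, by simpa [List.append_assoc] using hZ⟩
    · simp [wpow_length]
      calc u2.length = J := rfl
        _ ≤ j * 1 := by omega
        _ ≤ j * t1.length := Nat.mul_le_mul_left j ht1l
        _ ≤ s1.length + (j * t1.length + u1.length) := by omega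
  obtain ⟨mJ, hmJ⟩ := key J le_rfl
  obtain ⟨mJ1, hmJ1⟩ := key (J + 1) (by omega)
  have lJ : s1.length + (J * t1.length + u1.length) = u2.length + mJ * v.length := by
    have := congrArg List.length hmJ
    simpa [wpow_length] using this
  have lJ1 : s1.length + ((J+1) * t1.length + u1.length) = u2.length + mJ1 * v.length := by
    have := congrArg List.length hmJ1
    simpa [wpow_length] using this
  have hmm : mJ * v.length + t1.length = mJ1 * v.length := by
    have e1 : (J+1) * t1.length = J * t1.length + t1.length := by ring
    omega
  have hmlt : mJ < mJ1 := by
    rcases Nat.lt_or_ge mJ mJ1 with h' | h'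
    · exact h'
    · exfalso
      have : mJ1 * v.length ≤ mJ * v.length := Nat.mul_le_mul_right _ h'
      omega
  set e := mJ1 - mJ with he
  have he1 : 1 ≤ e := by omega
  have hevl : e * v.length = t1.length := by
    have : mJ1 = mJ + e := by omega
    rw [this] at hmm
    have : mJ * v.length + e * v.length = (mJ + e) * v.length := by ring
    omega
  -- s1 ++ t1^{J+1} ++ u1 = (s1 ++ t1^J ++ u1) ++ v^e
  have hstep : wpow t1 (J+1) ++ u1 = (wpow t1 J ++ u1) ++ wpow v e := by
    refine List.append_cancel_left (as := s1) ?_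
    have h' : s1 ++ wpow t1 (J+1) ++ u1 = (s1 ++ wpow t1 J ++ u1) ++ wpow v e := by
      rw [hmJ1, hmJ, show mJ1 = mJ + e by omega, wpow_add, List.append_assoc]
    simpa [List.append_assoc] using h' 
  have hP : t1 ++ (wpow t1 0 ++ u1) = (wpow t1 0 ++ u1) ++ wpow v e := by
    have aux : ∀ j : ℕ, t1 ++ (wpow t1 (j+1) ++ u1) = (wpow t1 (j+1) ++ u1) ++ wpow v e →
        t1 ++ (wpow t1 j ++ u1) = (wpow t1 j ++ u1) ++ wpow v e := by
      intro j hPj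
      have hw : wpow t1 (j+1) = t1 ++ wpow t1 j := rfl
      rw [hw] at hPj
      exact List.append_cancel_left (as := t1) (by simpa [List.append_assoc] using hPj)
    have base : t1 ++ (wpow t1 J ++ u1) = (wpow t1 J ++ u1) ++ wpow v e := by
      have hw : wpow t1 (J+1) = t1 ++ wpow t1 J := rfl
      rw [hw, List.append_assoc] at hstep
      exact hstep
    have down : ∀ d : ℕ, t1 ++ (wpow t1 (J - d) ++ u1) = (wpow t1 (J - d) ++ u1) ++ wpow v e := by
      intro d
      induction d with
      | zero => simpa using base
      | succ d ihd =>
        rcases Nat.lt_or_ge d J with hd | hd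
        · have : J - d = (J - (d+1)) + 1 := by omega
          rw [this] at ihd
          exact aux _ ihd
        · have : J - (d+1) = J - d := by omega
          rw [this]; exact ihd
    have h0 := down J
    simpa using h0
  have := hP
  simp [wpow] at this
  exact ⟨e, he1, this⟩


lemma prim_rev {v : List B} (hv : Primitive v) : Primitive v.reverse := by
  refine ⟨by simpa using hv.1, ?_⟩
  intro y p hp hy
  apply hv.2 y.reverse p hp
  have := congrArg List.reverse hy
  simpa [wpow_reverse] using this

end CombComAux

open CombComAux in
theorem comb_com_2_2_rev {B : Type*} (s1 u1 w1 u2 w2 y2 t1 x2 v : List B)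
    (ht1 : t1 ≠ []) (hx2 : x2 ≠ []) (hv : Primitive v)
    (hlen : t1.length = x2.length)
    (h : ∀ i j : ℕ,
      s1 ++ wpow t1 j ++ u1 ++ wpow v i ++ w1 =
        u2 ++ wpow v i ++ w2 ++ wpow x2 j ++ y2) :
    ∃ f1 f2 : List B × List B, ∀ i : ℕ, 1 ≤ i → ∀ j : ℕ, 1 ≤ j → ∃ k : ℕ,
      wpow t1 j ++ u1 ++ wpow v i = capp f1 (wpow v k) ∧
      wpow v i ++ w2 ++ wpow x2 j = capp f2 (wpow v k) := by
  have hvl : 1 ≤ v.length := length_pos_of_ne_nil hv.1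
  obtain ⟨e1, he11, he1⟩ := main_lemma s1 u1 w1 u2 t1 v ht1 hv (by
    intro i j
    exact ⟨w2 ++ wpow x2 j ++ y2, by simpa [List.append_assoc] using h i j⟩)
  obtain ⟨e2, he21, he2⟩ := main_lemma y2.reverse w2.reverse u2.reverse w1.reverse
      x2.reverse v.reverse (by simpa using hx2) (prim_rev hv) (by
    intro i j
    refine ⟨u1.reverse ++ wpow t1.reverse j ++ s1.reverse, ?_⟩
    have := congrArg List.reverse (h i j)
    simp only [List.reverse_append, wpow_reverse] at this
    simpa [List.append_assoc] using this.symm)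
  -- he2 : x2.reverse ++ w2.reverse = w2.reverse ++ wpow v.reverse e2
  have he2' : w2 ++ x2 = wpow v e2 ++ w2 := by
    have := congrArg List.reverse he2
    simpa [List.reverse_append, wpow_reverse] using this
  have hL1 : t1.length = e1 * v.length := by
    have := congrArg List.length he1
    simp [wpow_length] at this
    omega
  have hL2 : x2.length = e2 * v.length := by
    have := congrArg List.length he2'
    simp [wpow_length] at this
    omega
  have hee : e2 = e1 := by
    have : e1 * v.length = e2 * v.length := by omega
    exact (Nat.eq_of_mul_eq_mul_right hvl this).symm
  rw [hee] at he2'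
  have it1 : ∀ j : ℕ, wpow t1 j ++ u1 = u1 ++ wpow v (j * e1) := by
    intro j
    induction j with
    | zero => simp [wpow]
    | succ j ihj =>
      have hw : wpow t1 (j+1) = t1 ++ wpow t1 j := rfl
      rw [hw, List.append_assoc, ihj, ← List.append_assoc, he1,
        show (j+1)*e1 = e1 + j*e1 by ring, wpow_add, List.append_assoc]
  have it2 : ∀ j : ℕ, w2 ++ wpow x2 j = wpow v (j * e1) ++ w2 := by
    intro j
    induction j with
    | zero => simp [wpow]
    | succ j ihj =>
      have hw : wpow x2 (j+1) = x2 ++ wpow x2 j := rfl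
      rw [hw, ← List.append_assoc, he2', List.append_assoc, ihj,
        show (j+1)*e1 = e1 + j*e1 by ring, wpow_add, List.append_assoc]
  refine ⟨(u1, []), ([], w2), ?_⟩
  intro i _ j _
  refine ⟨j * e1 + i, ?_, ?_⟩
  · rw [capp]
    simp only [List.append_nil]
    rw [it1 j, wpow_add, List.append_assoc]
  · rw [capp]
    simp only [List.nil_append]
    rw [List.append_assoc, it2 j, ← List.append_assoc, ← wpow_add,
      Nat.add_comm i (j * e1)]
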